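/- Let q be a prime power with q ≡ 3 (mod 4), and let C₀ be the set of nonzero squares in F_q. Then C₀ is a skew Hadamard difference set in (F_q, +): C₀ ∩ (-C₀) = ∅, C₀ ∪ (-C₀) = F_q \ {0}, and every nonzero element of F_q arises exactly (q-3)/4 times as a difference of two distinct elements of C₀. -/

import Mathlib

open Finset

/-- The Paley difference set: for a prime power `q ≡ 3 (mod 4)`, the nonzero squares of
`F_q` form a skew Hadamard difference set. -/
theorem stmt_12 (F : Type*) [Field F] [Fintype F] [DecidableEq F]
    (hq : Fintype.card F % 4 = 3) :
    (∀ x ∈ Finset.univ.filter (fun x : F => x ≠ 0 ∧ ∃ y, y ^ 2 = x),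
        -x ∉ Finset.univ.filter (fun x : F => x ≠ 0 ∧ ∃ y, y ^ 2 = x)) ∧
    (∀ x : F, x ≠ 0 →
        x ∈ Finset.univ.filter (fun x : F => x ≠ 0 ∧ ∃ y, y ^ 2 = x) ∨
        -x ∈ Finset.univ.filter (fun x : F => x ≠ 0 ∧ ∃ y, y ^ 2 = x)) ∧
    (∀ g : F, g ≠ 0 →
        (((Finset.univ.filter (fun x : F => x ≠ 0 ∧ ∃ y, y ^ 2 = x)) ×ˢ
          (Finset.univ.filter (fun x : F => x ≠ 0 ∧ ∃ y, y ^ 2 = x))).filter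
            (fun z => z.1 ≠ z.2 ∧ z.1 - z.2 = g)).card = (Fintype.card F - 3) / 4) := by
  have hodd : ringChar F ≠ 2 := by
    intro h
    have := FiniteField.even_card_iff_char_two.mp h
    omega
  have h2 : (2:F) ≠ 0 := Ring.two_ne_zero hodd
  have hns : ¬ IsSquare (-1 : F) := by
    rw [FiniteField.isSquare_neg_one_iff]; omega
  have hnegchar : ∀ x : F, quadraticChar F (-x) = - quadraticChar F x := by
    intro x
    rw [← neg_one_mul, map_mul, quadraticChar_neg_one_iff_not_isSquare.mpr hns, neg_one_mul]
  have hpred : ∀ x : F, (∃ y : F, y^2 = x) ↔ IsSquare x := by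
    intro x
    constructor
    · rintro ⟨y, rfl⟩; exact ⟨y, (pow_two y)⟩
    · rintro ⟨y, rfl⟩; exact ⟨y, (pow_two y)⟩
  -- skew property
  have hskew : ∀ x : F, x ≠ 0 → (IsSquare x ↔ ¬ IsSquare (-x)) := by
    intro x hx
    rw [← quadraticChar_one_iff_isSquare hx, ← quadraticChar_neg_one_iff_not_isSquare,
      hnegchar, neg_eq_iff_eq_neg, neg_neg]
  have hne2 : ∀ a : F, a ≠ 0 → a ≠ -a := by
    intro a ha h
    apply ha
    have h2a : (2:F) * a = 0 := by linear_combination h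
    rcases mul_eq_zero.mp h2a with h | h
    · exact absurd h h2
    · exact h
  refine ⟨?_, ?_, ?_⟩
  · -- part 1
    intro x hx hnx
    simp only [mem_filter, mem_univ, true_and, hpred] at hx hnx
    exact (hskew x hx.1).mp hx.2 hnx.2
  · -- part 2
    intro x hx
    simp only [mem_filter, mem_univ, true_and, hpred]
    by_cases h : IsSquare x
    · exact Or.inl ⟨hx, h⟩
    · refine Or.inr ⟨neg_ne_zero.mpr hx, ?_⟩
      by_contra hnx
      exact hnx ((hskew (-x) (neg_ne_zero.mpr hx)).mpr (by rwa [neg_neg]))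
  · -- part 3: the counting
    intro g hg
    set S := Finset.univ.filter (fun x : F => x ≠ 0 ∧ ∃ y : F, y ^ 2 = x) with hSdef
    set T := (S ×ˢ S).filter (fun z : F × F => z.1 ≠ z.2 ∧ z.1 - z.2 = g) with hTdef
    set A := Finset.univ.filter
      (fun p : F × F => p.1 ≠ 0 ∧ p.2 ≠ 0 ∧ p.1^2 - p.2^2 = g) with hAdef
    set U := Finset.univ.filter (fun u : F => u ≠ 0 ∧ u^2 ≠ g ∧ u^2 ≠ -g) with hUdef
    -- A ≃ U via (a,b) ↦ a + b
    have hAU : A.card = U.card := by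
      apply Finset.card_nbij' (fun p : F × F => p.1 + p.2)
        (fun u : F => ((u + g * u⁻¹)/2, (u - g * u⁻¹)/2))
      · rintro ⟨a, b⟩ hp
        simp only [hAdef, Finset.mem_coe, mem_filter, mem_univ, true_and] at hp
        obtain ⟨ha, hb, hab⟩ := hp
        have hu : a + b ≠ 0 := by
          intro h
          apply hg
          rw [← hab]
          have : a = -b := by linear_combination h
          rw [this]; ring
        simp only [hUdef, Finset.mem_coe, mem_filter, mem_univ, true_and]
        refine ⟨hu, ?_, ?_⟩
        · intro h
          have : (2 * b) * (a + b) = 0 := by linear_combination h - hab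
          rcases mul_eq_zero.mp this with h' | h'
          · rcases mul_eq_zero.mp h' with h'' | h''
            · exact h2 h''
            · exact hb h''
          · exact hu h'
        · intro h
          have : (2 * a) * (a + b) = 0 := by linear_combination h + hab
          rcases mul_eq_zero.mp this with h' | h'
          · rcases mul_eq_zero.mp h' with h'' | h''
            · exact h2 h''
            · exact ha h''
          · exact hu h'
      · intro u hu
        simp only [hUdef, Finset.mem_coe, mem_filter, mem_univ, true_and] at hu
        obtain ⟨hu0, hug, hung⟩ := hu
        simp only [hAdef, Finset.mem_coe, mem_filter, mem_univ, true_and]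
        refine ⟨?_, ?_, ?_⟩
        · apply div_ne_zero _ h2
          intro h
          apply hung
          have h' := mul_eq_zero_of_left h u
          field_simp at h'
          linear_combination h'
        · apply div_ne_zero _ h2
          intro h
          apply hug
          have h' := mul_eq_zero_of_left h u
          field_simp at h'
          linear_combination h'
        · field_simp
          ring
      · rintro ⟨a, b⟩ hp
        simp only [hAdef, Finset.mem_coe, mem_filter, mem_univ, true_and] at hp
        obtain ⟨ha, hb, hab⟩ := hp
        have hu : a + b ≠ 0 := by
          intro h
          apply hg
          rw [← hab]
          have : a = -b := by linear_combination h
          rw [this]; ring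
        have key : g * (a + b)⁻¹ = a - b := by
          field_simp
          linear_combination -hab
        simp only [key, Prod.mk.injEq]
        constructor
        · field_simp; ring
        · field_simp; ring
      · intro u hu
        simp only [hUdef, Finset.mem_coe, mem_filter, mem_univ, true_and] at hu
        have hu0 : u ≠ 0 := hu.1
        field_simp
        ring
    -- U.card + 3 = card F
    have hU3 : U.card + 3 = Fintype.card F := by
      have hVU := Finset.card_filter_add_card_filter_not
        (s := (Finset.univ : Finset F))
        (p := fun u : F => u = 0 ∨ u^2 = g ∨ u^2 = -g)
      rw [Finset.card_univ] at hVU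
      have hUeq : Finset.univ.filter (fun u : F => ¬(u = 0 ∨ u^2 = g ∨ u^2 = -g)) = U := by
        rw [hUdef]
        apply Finset.filter_congr
        intro u _
        push_neg
        tauto
      rw [hUeq] at hVU
      -- exactly one of g, -g is a square, with a nonzero root r
      have hroot : ∃ r : F, r ≠ 0 ∧ ((r^2 = g ∧ ¬∃ u : F, u^2 = -g) ∨
          (r^2 = -g ∧ ¬∃ u : F, u^2 = g)) := by
        by_cases h : IsSquare g
        · obtain ⟨r, hr⟩ := (hpred g).mpr h
          refine ⟨r, fun h0 => hg (by rw [← hr, h0]; ring), Or.inl ⟨hr, ?_⟩⟩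
          intro ⟨u, hu⟩
          exact (hskew g hg).mp h ((hpred (-g)).mp ⟨u, hu⟩)
        · have hnsg : IsSquare (-g) :=
            (hskew (-g) (neg_ne_zero.mpr hg)).mpr (by rwa [neg_neg])
          obtain ⟨r, hr⟩ := (hpred (-g)).mpr hnsg
          refine ⟨r, fun h0 => hg ?_, Or.inr ⟨hr, ?_⟩⟩
          · have hgz : -g = 0 := by rw [← hr, h0]; ring
            exact neg_eq_zero.mp hgz
          · intro ⟨u, hu⟩
            exact h ((hpred g).mp ⟨u, hu⟩)
      obtain ⟨r, hr0, hr⟩ := hroot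
      have hVcard : (Finset.univ.filter (fun u : F => u = 0 ∨ u^2 = g ∨ u^2 = -g)).card = 3 := by
        have hVset : Finset.univ.filter (fun u : F => u = 0 ∨ u^2 = g ∨ u^2 = -g)
            = {0, r, -r} := by
          ext u
          simp only [mem_filter, mem_univ, true_and, mem_insert, mem_singleton]
          rcases hr with ⟨hrg, hno⟩ | ⟨hrg, hno⟩
          · constructor
            · rintro (rfl | h | h)
              · exact Or.inl rfl
              · have : (u - r) * (u + r) = 0 := by linear_combination h - hrg
                rcases mul_eq_zero.mp this with h' | h'
                · exact Or.inr (Or.inl (by linear_combination h'))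
                · exact Or.inr (Or.inr (by linear_combination h'))
              · exact absurd ⟨u, h⟩ hno
            · rintro (rfl | rfl | rfl)
              · exact Or.inl rfl
              · exact Or.inr (Or.inl hrg)
              · exact Or.inr (Or.inl (by linear_combination hrg))
          · constructor
            · rintro (rfl | h | h)
              · exact Or.inl rfl
              · exact absurd ⟨u, h⟩ hno
              · have : (u - r) * (u + r) = 0 := by linear_combination h - hrg
                rcases mul_eq_zero.mp this with h' | h'
                · exact Or.inr (Or.inl (by linear_combination h'))
                · exact Or.inr (Or.inr (by linear_combination h'))
            · rintro (rfl | rfl | rfl)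
              · exact Or.inl rfl
              · exact Or.inr (Or.inr hrg)
              · exact Or.inr (Or.inr (by linear_combination hrg))
        rw [hVset]
        rw [Finset.card_insert_of_notMem, Finset.card_insert_of_notMem, Finset.card_singleton]
        · simp only [mem_singleton]
          exact hne2 r hr0
        · simp only [mem_insert, mem_singleton]
          push_neg
          exact ⟨fun h => hr0 h.symm, fun h => (neg_ne_zero.mpr hr0) h.symm⟩
      omega
    -- A.card = 4 * T.card
    have hAT : A.card = 4 * T.card := by
      rw [Finset.card_eq_sum_card_fiberwise
        (f := fun p : F × F => (p.1^2, p.2^2)) (t := T) ?_]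
      · rw [Finset.sum_congr rfl ?_, Finset.sum_const, smul_eq_mul, mul_comm]
        rintro ⟨x, y⟩ ht
        simp only [hTdef, mem_filter, Finset.mem_product, hSdef, mem_univ, true_and] at ht
        obtain ⟨⟨⟨hx0, a, ha⟩, hy0, b, hb⟩, hxy, hd⟩ := ht
        have ha0 : a ≠ 0 := fun h => hx0 (by rw [← ha, h]; ring)
        have hb0 : b ≠ 0 := fun h => hy0 (by rw [← hb, h]; ring)
        have hfib : A.filter (fun p : F × F => (p.1^2, p.2^2) = (x, y))
            = {(a, b), (a, -b), (-a, b), (-a, -b)} := by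
          ext ⟨p1, p2⟩
          simp only [hAdef, mem_filter, mem_univ, true_and, Prod.mk.injEq,
            mem_insert, mem_singleton]
          constructor
          · rintro ⟨⟨hp1, hp2, hpd⟩, hxx, hyy⟩
            have h1 : (p1 - a) * (p1 + a) = 0 := by linear_combination hxx - ha
            have h2' : (p2 - b) * (p2 + b) = 0 := by linear_combination hyy - hb
            rcases mul_eq_zero.mp h1 with h1' | h1' <;>
              rcases mul_eq_zero.mp h2' with h2'' | h2''
            · exact Or.inl ⟨by linear_combination h1', by linear_combination h2''⟩
            · exact Or.inr (Or.inl ⟨by linear_combination h1', by linear_combination h2''⟩)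
            · exact Or.inr (Or.inr (Or.inl ⟨by linear_combination h1',
                by linear_combination h2''⟩))
            · exact Or.inr (Or.inr (Or.inr ⟨by linear_combination h1',
                by linear_combination h2''⟩))
          · have hd' : a^2 - b^2 = g := by rw [ha, hb]; exact hd
            rintro (⟨rfl, rfl⟩ | ⟨rfl, rfl⟩ | ⟨rfl, rfl⟩ | ⟨rfl, rfl⟩)
            · exact ⟨⟨ha0, hb0, hd'⟩, ha, hb⟩
            · exact ⟨⟨ha0, neg_ne_zero.mpr hb0, by linear_combination hd'⟩,
                ha, by linear_combination hb⟩
            · exact ⟨⟨neg_ne_zero.mpr ha0, hb0, by linear_combination hd'⟩,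
                by linear_combination ha, hb⟩
            · exact ⟨⟨neg_ne_zero.mpr ha0, neg_ne_zero.mpr hb0, by linear_combination hd'⟩,
                by linear_combination ha, by linear_combination hb⟩
        rw [hfib]
        have hba : b ≠ -b := hne2 b hb0
        have haa : a ≠ -a := hne2 a ha0
        rw [Finset.card_insert_of_notMem
            (by simp [Prod.ext_iff, haa, hba, Ne.symm haa, Ne.symm hba]),
          Finset.card_insert_of_notMem
            (by simp [Prod.ext_iff, haa, hba, Ne.symm haa, Ne.symm hba]),
          Finset.card_insert_of_notMem
            (by simp [Prod.ext_iff, haa, hba, Ne.symm haa, Ne.symm hba]),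
          Finset.card_singleton]
      · rintro ⟨a, b⟩ hp
        simp only [hAdef, Finset.mem_coe, mem_filter, mem_univ, true_and] at hp
        obtain ⟨ha, hb, hab⟩ := hp
        simp only [hTdef, Finset.mem_coe, mem_filter, Finset.mem_product, hSdef, mem_univ, true_and]
        refine ⟨⟨⟨pow_ne_zero 2 ha, a, rfl⟩, pow_ne_zero 2 hb, b, rfl⟩, ?_, hab⟩
        intro h
        exact hg (by rw [← hab, h]; ring)
    omega
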